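/- Let E be a Banach space, I ∈ C¹(E, ℝ), I₀: E → ℝ locally Lipschitz and convex, and x ∈ E, ε > 0. Then the following are equivalent: (a) I₀(y) - I₀(x) ≥ I'(x)(y - x) - ε‖y - x‖ for all y ∈ E; (b) there exists z ∈ E* with ‖z‖_* ≤ ε such that I₀(y) - I₀(x) ≥ I'(x)(y - x) + ⟨z, y - x⟩ for all y ∈ E. -/

import Mathlib

theorem epsilon_subdifferential_equiv {E : Type*} [NormedAddCommGroup E] [NormedSpace ℝ E]
    [CompleteSpace E]
    (I₀ : E → ℝ) (hconv : ConvexOn ℝ Set.univ I₀) (hlip : LocallyLipschitz I₀)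
    (I : E → ℝ) (x : E) (I' : E →L[ℝ] ℝ) (hI : HasFDerivAt I I' x)
    (ε : ℝ) (hε : 0 < ε) :
    (∀ y : E, I₀ y - I₀ x ≥ I' (y - x) - ε * ‖y - x‖) ↔
      (∃ z : E →L[ℝ] ℝ, ‖z‖ ≤ ε ∧ ∀ y : E, I₀ y - I₀ x ≥ I' (y - x) + z (y - x)) := by
  constructor
  · intro ha
    -- the shifted convex function f
    set f : E → ℝ := fun w => I₀ (x + w) - I₀ x - I' w with hf
    have hfconv : ConvexOn ℝ Set.univ f := by
      refine ⟨convex_univ, ?_⟩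
      intro w₁ _ w₂ _ a b haa hbb hab
      have h1 : a • (x + w₁) + b • (x + w₂) = x + (a • w₁ + b • w₂) := by
        have : a • x + b • x = x := by
          rw [← add_smul, hab, one_smul]
        rw [smul_add, smul_add]
        rw [show a • x + a • w₁ + (b • x + b • w₂) = (a • x + b • x) + (a • w₁ + b • w₂) by abel,
          this]
      have h2 := hconv.2 (Set.mem_univ (x + w₁)) (Set.mem_univ (x + w₂)) haa hbb hab
      rw [h1] at h2
      simp only [smul_eq_mul] at h2
      have h3 : a * I₀ x + b * I₀ x = I₀ x := by rw [← add_mul, hab, one_mul]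
      simp only [hf, smul_eq_mul, map_add, map_smul]
      nlinarith [h2, h3]
    have hfcont : Continuous f := by
      exact (hlip.continuous.comp (continuous_const.add continuous_id)).sub
        continuous_const |>.sub I'.continuous
    have hf0 : f 0 = 0 := by simp [hf]
    have hflb : ∀ w, -(ε * ‖w‖) ≤ f w := by
      intro w
      have := ha (x + w)
      simp only [add_sub_cancel_left] at this
      simp only [hf]; linarith
    -- sets
    set A : Set (E × ℝ) := {p | f p.1 < p.2} with hA
    set B : Set (E × ℝ) := {p | p.2 ≤ -(ε * ‖p.1‖)} with hB
    have hAconv : Convex ℝ A := by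
      have := hfconv.convex_strict_epigraph
      convert this using 1
      ext p; simp [hA]
    have hAopen : IsOpen A := isOpen_lt (hfcont.comp continuous_fst) continuous_snd
    have hBconv : Convex ℝ B := by
      have hcon : ConcaveOn ℝ Set.univ (fun w : E => -(ε * ‖w‖)) := by
        have := (convexOn_univ_norm (E := E)).smul hε.le
        exact this.neg
      have := hcon.convex_hypograph
      convert this using 1
      ext p; simp [hB]
    have hdisj : Disjoint A B := by
      rw [Set.disjoint_left]
      intro p hpA hpB
      exact absurd (lt_of_le_of_lt (le_trans hpB (hflb p.1)) hpA) (lt_irrefl _)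
    obtain ⟨L, u, hL1, hL2⟩ := geometric_hahn_banach_open hAconv hAopen hBconv hdisj
    set c : ℝ := L (0, 1) with hc
    have hLsplit : ∀ w t, L (w, t) = L (w, 0) + t * c := by
      intro w t
      have : (w, t) = (w, (0:ℝ)) + t • ((0:E), (1:ℝ)) := by
        simp [Prod.ext_iff]
      rw [this, map_add, map_smul]; simp [hc, mul_comm]
    have hB0 : ((0:E), (0:ℝ)) ∈ B := by simp [hB]
    have hu0 : u ≤ 0 := by
      have := hL2 _ hB0
      rwa [Prod.mk_zero_zero, map_zero] at this
    have hAd : ∀ δ : ℝ, 0 < δ → δ * c < u := by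
      intro δ hδ
      have : ((0:E), δ) ∈ A := by simp [hA, hf0, hδ]
      have := hL1 _ this
      rw [hLsplit] at this
      have h0 : L ((0:E), (0:ℝ)) = 0 := by
        have h := L.map_zero
        rw [Prod.mk_zero_zero]; exact h
      rw [h0, zero_add] at this
      exact this
    have hcneg : c < 0 := lt_of_lt_of_le (by simpa using hAd 1 one_pos) hu0
    have hune : u = 0 := by
      rcases lt_or_eq_of_le hu0 with hu | hu
      · exfalso
        have hδpos : 0 < u / (2 * c) := div_pos_iff.mpr (Or.inr ⟨hu, by linarith⟩)
        have h1 := hAd _ hδpos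
        have heq : u / (2 * c) * c = u / 2 := by
          rw [div_mul_eq_mul_div, mul_comm u c, mul_comm 2 c,
            mul_div_mul_left _ _ hcneg.ne]
        rw [heq] at h1
        linarith
      · exact hu
    rw [hune] at hL1 hL2
    -- build z
    have hnc : (0:ℝ) < -c := neg_pos.mpr hcneg
    have hlow : ∀ w : E, -(ε * ‖w‖) ≤ (-c)⁻¹ * L (w, 0) := by
      intro w
      have hmem : ((w, -(ε * ‖w‖)) : E × ℝ) ∈ B := by simp [hB]
      have h := hL2 _ hmem
      rw [hLsplit] at h
      have key : ε * ‖w‖ * c ≤ L (w, 0) := by nlinarith [h]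
      have h3 := mul_le_mul_of_nonneg_left key (inv_pos.mpr hnc).le
      have h4 : (-c)⁻¹ * (ε * ‖w‖ * c) = -(ε * ‖w‖) := by
        field_simp
        rw [mul_div_cancel_left₀ _ hcneg.ne]
      linarith [h3, h4.symm.le, h4.le]
    have hle : ∀ w : E, (-c)⁻¹ * L (w, 0) ≤ f w := by
      intro w
      by_contra hcon
      push_neg at hcon
      set t : ℝ := (f w + (-c)⁻¹ * L (w, 0)) / 2 with ht
      have htA : ((w, t) : E × ℝ) ∈ A := by
        simp only [hA, Set.mem_setOf_eq]
        rw [ht]; linarith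
      have h := hL1 _ htA
      rw [hLsplit] at h
      have h2 : (-c)⁻¹ * L (w, 0) < t := by
        rw [inv_mul_lt_iff₀ hnc]
        linarith
      rw [ht] at h2
      linarith
    have hzapp : ∀ w : E, ((-c)⁻¹ • (L.comp (ContinuousLinearMap.inl ℝ E ℝ))) w
        = (-c)⁻¹ * L (w, 0) := by
      intro w
      simp [ContinuousLinearMap.smul_apply, smul_eq_mul]
    refine ⟨(-c)⁻¹ • (L.comp (ContinuousLinearMap.inl ℝ E ℝ)), ?_, ?_⟩
    · refine ContinuousLinearMap.opNorm_le_bound _ hε.le ?_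
      intro w
      rw [hzapp, Real.norm_eq_abs, abs_le]
      have hneg : L ((-w : E), (0:ℝ)) = -L (w, 0) := by
        rw [← map_neg]; congr 1 <;> simp
      have h1 := hlow w
      have h2 := hlow (-w)
      rw [hneg, norm_neg] at h2
      constructor <;> nlinarith [h1, h2]
    · intro y
      have h1 := hle (y - x)
      rw [hzapp]
      have hfy : f (y - x) = I₀ y - I₀ x - I' (y - x) := by
        simp only [hf]
        rw [add_sub_cancel]
      rw [hfy] at h1
      linarith
  · rintro ⟨z, hz, hb⟩ y
    have h1 := hb y
    have h2 : -(‖z‖ * ‖y - x‖) ≤ z (y - x) := by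
      have h2' : |z (y - x)| ≤ ‖z‖ * ‖y - x‖ := by
        simpa [Real.norm_eq_abs] using z.le_opNorm (y - x)
      linarith [(abs_le.mp h2').1]
    have h3 : ‖z‖ * ‖y - x‖ ≤ ε * ‖y - x‖ :=
      mul_le_mul_of_nonneg_right hz (norm_nonneg _)
    nlinarith [h1, h2, h3]
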